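/- (Proposition 2) For every horizon m ≥ 0, every μ ∈ ℝ and all ñ with 0 < ñ < n: if V_m(μ,n,γ,τ,λ) > 0 then V_m(μ,ñ,γ,τ,λ) > 0. -/

import Mathlib

open MeasureTheory ProbabilityTheory
open Real
open scoped NNReal ENNReal

/-- Finite-horizon value function of the Gaussian one-armed bandit:
`V γ τ m μ n λ`, with discount `γ`, observation precision `τ`, horizon `m`,
posterior state `(μ, n)` and safe-arm reward `λ`. The expectation over the
next observation is taken under the Gaussian predictive distribution
`𝒩(μ, 1/n + 1/τ)`. -/
noncomputable def V (γ τ : ℝ) : ℕ → ℝ → ℝ → ℝ → ℝ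
  | 0, μ, _n, lam => max (μ - lam) 0 / (1 - γ)
  | m + 1, μ, n, lam =>
      max (μ - lam + γ * ∫ y, V γ τ m ((n * μ + τ * y) / (n + τ)) (n + τ) lam
        ∂(gaussianReal μ (1 / n + 1 / τ).toNNReal)) 0

namespace NmabAux

lemma integrable_abs_gaussian (μ : ℝ) (v : ℝ≥0) :
    Integrable (fun x => |x|) (gaussianReal μ v) := by
  have key : ∀ w : ℝ≥0, Integrable (fun x => |x|) (gaussianReal 0 w) := by
    intro w
    by_cases hw : w = 0
    · subst hw
      rw [gaussianReal_zero_var]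
      refine ⟨(measurable_abs).aestronglyMeasurable, ?_⟩
      simp [HasFiniteIntegral, lintegral_dirac]
    · have hwpos : (0:ℝ) < (w:ℝ) := by positivity
      rw [gaussianReal_of_var_ne_zero 0 hw,
        integrable_withDensity_iff (measurable_gaussianPDF 0 w)
          (ae_of_all _ fun x => ENNReal.ofReal_lt_top)]
      have hb : (0:ℝ) < 1/(2*(w:ℝ)) := by positivity
      have hint : Integrable (fun x : ℝ => |x| * Real.exp (-(1/(2*(w:ℝ))) * x^2)) volume := by
        have := (integrable_mul_exp_neg_mul_sq hb).abs
        simpa [abs_mul, abs_of_pos (Real.exp_pos _)] using this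
      have hint2 := hint.const_mul ((Real.sqrt (2*Real.pi*(w:ℝ)))⁻¹)
      refine hint2.congr (ae_of_all _ fun x => ?_)
      have hnn : 0 ≤ gaussianPDFReal 0 w x := gaussianPDFReal_nonneg 0 w x
      have hpdf : (gaussianPDF 0 w x).toReal = gaussianPDFReal 0 w x := by
        simp [gaussianPDF, ENNReal.toReal_ofReal hnn]
      dsimp only
      rw [hpdf, gaussianPDFReal_def]
      dsimp only
      rw [show -(x - 0)^2/(2*(w:ℝ)) = -(1/(2*(w:ℝ))) * x^2 by ring]
      ring
  have hmap : (gaussianReal 0 v).map (· + μ) = gaussianReal μ v := by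
    rw [gaussianReal_map_add_const, zero_add]
  rw [← hmap, integrable_map_measure (by rw [hmap]; exact measurable_abs.aestronglyMeasurable)
    (measurable_add_const μ).aemeasurable]
  refine Integrable.mono' (((key v).add (integrable_const |μ|))) ?_ (ae_of_all _ fun x => ?_)
  · exact (measurable_abs.comp (measurable_add_const μ)).aestronglyMeasurable
  · simp only [Function.comp_apply, Real.norm_eq_abs, abs_abs]
    exact abs_add_le x μ

lemma integrable_growth {f : ℝ → ℝ} (hm : Measurable f) {A B : ℝ}
    (hgr : ∀ x, |f x| ≤ A + B * |x|) (μ : ℝ) (v : ℝ≥0) :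
    Integrable f (gaussianReal μ v) := by
  refine Integrable.mono' ((integrable_const A).add ((integrable_abs_gaussian μ v).const_mul B))
    hm.aestronglyMeasurable (ae_of_all _ fun x => ?_)
  simpa [Real.norm_eq_abs] using hgr x

lemma integral_gauss_translate {f : ℝ → ℝ} {μ : ℝ} {v : ℝ≥0}
    (hf : AEStronglyMeasurable f (gaussianReal μ v)) :
    ∫ x, f x ∂gaussianReal μ v = ∫ z, f (z + μ) ∂gaussianReal 0 v := by
  have h : (gaussianReal 0 v).map (· + μ) = gaussianReal μ v := by
    rw [gaussianReal_map_add_const, zero_add]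
  rw [← h, integral_map (measurable_add_const μ).aemeasurable (h ▸ hf)]

lemma gauss_reflect (μ : ℝ) (v : ℝ≥0) :
    (gaussianReal μ v).map (fun x => 2*μ - x) = gaussianReal μ v := by
  have hfun : (fun x : ℝ => 2*μ - x) = (fun x => x + 2*μ) ∘ (fun x => (-1) * x) := by
    funext x; simp [Function.comp]; ring
  rw [hfun, ← Measure.map_map (measurable_add_const _) (measurable_const_mul _),
    gaussianReal_map_const_mul, gaussianReal_map_add_const]
  have h1 : (⟨(-1:ℝ)^2, sq_nonneg _⟩ : ℝ≥0) = 1 := by ext; norm_num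
  rw [show (NNReal.mk ((-1:ℝ)^2) (sq_nonneg _)) * v = v by apply NNReal.coe_injective; simp]
  congr 1
  ring

lemma integral_gauss_reflect {f : ℝ → ℝ} {μ : ℝ} {v : ℝ≥0}
    (hf : AEStronglyMeasurable f (gaussianReal μ v)) :
    ∫ x, f (2*μ - x) ∂gaussianReal μ v = ∫ x, f x ∂gaussianReal μ v := by
  conv_rhs => rw [← gauss_reflect μ v]
  rw [integral_map (by fun_prop) ((gauss_reflect μ v).symm ▸ hf)]

/-- Gaussian smoothing of a nonneg convex function with linear growth is
monotone in the variance. -/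
lemma gauss_mono_var {f : ℝ → ℝ} (hm : Measurable f) (hnn : ∀ x, 0 ≤ f x)
    (hconv : ConvexOn ℝ Set.univ f) {A B : ℝ} (hB : 0 ≤ B) (hgr : ∀ x, f x ≤ A + B * |x|)
    {v1 v2 : ℝ≥0} (h : v1 ≤ v2) (μ : ℝ) :
    ∫ x, f x ∂gaussianReal μ v1 ≤ ∫ x, f x ∂gaussianReal μ v2 := by
  have hgr' : ∀ x, |f x| ≤ A + B * |x| := fun x => by
    rw [abs_of_nonneg (hnn x)]; exact hgr x
  by_cases hv2 : v2 = 0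
  · have hv1 : v1 = 0 := le_antisymm (hv2 ▸ h) zero_le
    rw [hv1, hv2]
  · have hv2pos : (0:ℝ) < (v2:ℝ) := by positivity
    set r : ℝ := Real.sqrt ((v1:ℝ)/(v2:ℝ)) with hr
    have hr0 : 0 ≤ r := Real.sqrt_nonneg _
    have hr1 : r ≤ 1 := by
      rw [hr, show (1:ℝ) = Real.sqrt 1 by simp]
      apply Real.sqrt_le_sqrt
      rw [div_le_one hv2pos]
      exact_mod_cast h
    have hrsq : r^2 = (v1:ℝ)/(v2:ℝ) := Real.sq_sqrt (by positivity)
    have hmap : (gaussianReal μ v2).map (fun x => r * x + (μ - r*μ)) = gaussianReal μ v1 := by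
      have hfun : (fun x : ℝ => r * x + (μ - r*μ)) = (fun x => x + (μ - r*μ)) ∘ (fun x => r * x) := by
        funext x; simp [Function.comp]
      rw [hfun, ← Measure.map_map (measurable_add_const _) (measurable_const_mul _),
        gaussianReal_map_const_mul, gaussianReal_map_add_const]
      congr 1
      · ring
      · apply NNReal.coe_injective
        push_cast
        rw [hrsq]
        field_simp
    have hint2 : Integrable f (gaussianReal μ v2) := integrable_growth hm hgr' μ v2
    have hintr : Integrable (fun x => f (2*μ - x)) (gaussianReal μ v2) := by
      refine integrable_growth (hm.comp (by fun_prop)) (A := A + B*(2*|μ|)) (B := B) ?_ μ v2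
      intro x
      have h1 : |2*μ - x| ≤ 2*|μ| + |x| :=
        (abs_sub _ _).trans (by rw [abs_mul]; norm_num)
      calc |f (2*μ - x)| ≤ A + B * |2*μ - x| := hgr' _
        _ ≤ A + B*(2*|μ|) + B * |x| := by nlinarith
    have step1 : ∫ x, f x ∂gaussianReal μ v1
        = ∫ x, f (r * x + (μ - r*μ)) ∂gaussianReal μ v2 := by
      rw [← hmap, integral_map (by fun_prop) (hmap.symm ▸ hm.aestronglyMeasurable)]
    have step2 : ∫ x, f (r * x + (μ - r*μ)) ∂gaussianReal μ v2
        ≤ ∫ x, ((1+r)/2) * f x + ((1-r)/2) * f (2*μ - x) ∂gaussianReal μ v2 := by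
      refine integral_mono_of_nonneg (ae_of_all _ fun x => hnn _)
        ((hint2.const_mul _).add (hintr.const_mul _)) (ae_of_all _ fun x => ?_)
      have ha : (0:ℝ) ≤ (1+r)/2 := by linarith
      have hb : (0:ℝ) ≤ (1-r)/2 := by linarith
      have hab : (1+r)/2 + (1-r)/2 = 1 := by ring
      have := hconv.2 (Set.mem_univ x) (Set.mem_univ (2*μ - x)) ha hb hab
      simpa [smul_eq_mul, show ((1+r)/2) * x + ((1-r)/2) * (2*μ - x) = r * x + (μ - r*μ) by ring]
        using this
    have step3 : ∫ x, ((1+r)/2) * f x + ((1-r)/2) * f (2*μ - x) ∂gaussianReal μ v2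
        = ∫ x, f x ∂gaussianReal μ v2 := by
      rw [integral_add (hint2.const_mul _) (hintr.const_mul _),
        integral_const_mul, integral_const_mul,
        integral_gauss_reflect hm.aestronglyMeasurable]
      ring
    linarith [step1, step2, step3]


noncomputable def pv (τ n : ℝ) : ℝ≥0 :=
  ⟨(τ/(n+τ))^2, sq_nonneg _⟩ * (1/n + 1/τ).toNNReal

lemma pv_coe {τ n : ℝ} (hτ : 0 < τ) (hn : 0 < n) : (pv τ n : ℝ) = τ / (n*(n+τ)) := by
  have h1 : (0:ℝ) < n + τ := by linarith
  have h2 : (0:ℝ) ≤ 1/n + 1/τ := by positivity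
  have h3 : (pv τ n : ℝ) = (τ/(n+τ))^2 * ((1/n + 1/τ).toNNReal : ℝ) := rfl
  rw [h3, Real.coe_toNNReal _ h2]
  field_simp
  ring

lemma pv_mono {τ nt n : ℝ} (hτ : 0 < τ) (h0 : 0 < nt) (h : nt ≤ n) : pv τ n ≤ pv τ nt := by
  have hn : 0 < n := lt_of_lt_of_le h0 h
  rw [← NNReal.coe_le_coe, pv_coe hτ hn, pv_coe hτ h0]
  rw [div_le_div_iff₀ (by positivity) (by positivity)]
  have h1 : nt*(nt+τ) ≤ n*(n+τ) := by nlinarith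
  have h2 := mul_le_mul_of_nonneg_left h1 hτ.le
  linarith

lemma map_predictive {τ : ℝ} (hτ : 0 < τ) {n : ℝ} (hn : 0 < n) (μ : ℝ) :
    (gaussianReal μ (1/n + 1/τ).toNNReal).map (fun y => (n*μ + τ*y)/(n+τ))
      = gaussianReal μ (pv τ n) := by
  have h1 : (0:ℝ) < n + τ := by linarith
  have hfun : (fun y : ℝ => (n*μ + τ*y)/(n+τ))
      = (fun x => x + (n*μ/(n+τ))) ∘ (fun y => (τ/(n+τ)) * y) := by
    funext y
    simp only [Function.comp_apply]
    field_simp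
    ring
  rw [hfun, ← Measure.map_map (measurable_add_const _) (measurable_const_mul _),
    gaussianReal_map_const_mul, gaussianReal_map_add_const]
  congr 1
  field_simp
  ring

lemma V_succ_repr (γ τ lam : ℝ) (hτ : 0 < τ) (m : ℕ) {n : ℝ} (hn : 0 < n)
    (hmeas : Measurable fun x => V γ τ m x (n+τ) lam) (μ : ℝ) :
    V γ τ (m+1) μ n lam
      = max (μ - lam + γ * ∫ x, V γ τ m x (n+τ) lam ∂gaussianReal μ (pv τ n)) 0 := by
  have h := map_predictive hτ hn μ
  have hφ : Measurable (fun y : ℝ => (n*μ + τ*y)/(n+τ)) := by fun_prop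
  have hI : ∫ x, V γ τ m x (n+τ) lam ∂gaussianReal μ (pv τ n)
      = ∫ y, V γ τ m ((n*μ + τ*y)/(n+τ)) (n+τ) lam
          ∂gaussianReal μ (1/n + 1/τ).toNNReal := by
    rw [← h, integral_map hφ.aemeasurable (by rw [h]; exact hmeas.aestronglyMeasurable)]
  rw [hI]
  rfl

lemma bundle (γ τ lam : ℝ) (hγ0 : 0 ≤ γ) (hγ1 : γ < 1) (hτ : 0 < τ) :
    ∀ m : ℕ, ∀ n : ℝ, 0 < n →
      Measurable (fun μ => V γ τ m μ n lam) ∧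
      (∀ μ, 0 ≤ V γ τ m μ n lam) ∧
      (∃ A B : ℝ, 0 ≤ A ∧ 0 ≤ B ∧ ∀ μ, V γ τ m μ n lam ≤ A + B * |μ|) ∧
      ConvexOn ℝ Set.univ (fun μ => V γ τ m μ n lam) ∧
      (∀ nt, 0 < nt → nt < n → ∀ μ, V γ τ m μ n lam ≤ V γ τ m μ nt lam) := by
  have h1γ : (0:ℝ) < 1 - γ := by linarith
  intro m
  induction m with
  | zero =>
    intro n hn
    refine ⟨?_, ?_, ?_, ?_, ?_⟩
    · show Measurable fun μ => max (μ - lam) 0 / (1 - γ)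
      fun_prop
    · intro μ
      show 0 ≤ max (μ - lam) 0 / (1 - γ)
      positivity
    · refine ⟨|lam|/(1-γ), 1/(1-γ), by positivity, by positivity, fun μ => ?_⟩
      show max (μ - lam) 0 / (1 - γ) ≤ |lam|/(1-γ) + 1/(1-γ) * |μ|
      have h2 : max (μ - lam) 0 ≤ |lam| + |μ| := by
        apply max_le
        · linarith [le_abs_self μ, neg_abs_le lam]
        · positivity
      calc max (μ - lam) 0 / (1-γ) ≤ (|lam| + |μ|)/(1-γ) := by
            exact (div_le_div_iff_of_pos_right h1γ).mpr h2
        _ = |lam|/(1-γ) + 1/(1-γ) * |μ| := by ring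
    · have hb : ConvexOn ℝ Set.univ (fun μ : ℝ => max (μ - lam) 0) := by
        refine ⟨convex_univ, fun x _ y _ a b ha hb hab => ?_⟩
        simp only [smul_eq_mul]
        apply max_le
        · have h1 : x - lam ≤ max (x-lam) 0 := le_max_left _ _
          have h2 : y - lam ≤ max (y-lam) 0 := le_max_left _ _
          have e1 := mul_le_mul_of_nonneg_left h1 ha
          have e2 := mul_le_mul_of_nonneg_left h2 hb
          have e3 : a*x + b*y - lam = a*(x-lam) + b*(y-lam) := by
            rw [show b = 1 - a from by linarith]
            ring
          linarith
        · have h1 : (0:ℝ) ≤ max (x-lam) 0 := le_max_right _ _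
          have h2 : (0:ℝ) ≤ max (y-lam) 0 := le_max_right _ _
          have := mul_nonneg ha h1
          have := mul_nonneg hb h2
          linarith
      have heq : (fun μ : ℝ => max (μ - lam) 0 / (1 - γ))
          = fun μ => (1-γ)⁻¹ • max (μ - lam) 0 := by
        funext μ
        rw [smul_eq_mul]
        ring
      show ConvexOn ℝ Set.univ (fun μ : ℝ => max (μ - lam) 0 / (1 - γ))
      rw [heq]
      exact hb.smul (by positivity)
    · intro nt _ _ μ
      exact le_of_eq rfl
  | succ m ih =>
    intro n hn
    have hnτ : (0:ℝ) < n + τ := by linarith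
    obtain ⟨hmeas, hnn, ⟨A, B, hA, hB, hgr⟩, hconv, hmono⟩ := ih (n+τ) (by linarith)
    set f : ℝ → ℝ := fun x => V γ τ m x (n+τ) lam with hf
    have hgrabs : ∀ x, |f x| ≤ A + B * |x| := fun x => by
      rw [abs_of_nonneg (hnn x)]; exact hgr x
    set ν0 := gaussianReal 0 (pv τ n) with hν0
    set K : ℝ → ℝ := fun μ => ∫ z, f (z + μ) ∂ν0 with hK
    have hKint : ∀ μ, Integrable (fun z => f (z + μ)) ν0 := by
      intro μ
      refine integrable_growth
        (show Measurable fun z => f (z + μ) from hmeas.comp (measurable_add_const μ))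
        (A := A + B*|μ|) (B := B) (fun z => ?_) 0 _
      show |f (z + μ)| ≤ A + B*|μ| + B * |z|
      have h1 : |z + μ| ≤ |z| + |μ| := abs_add_le _ _
      have h2 := hgrabs (z + μ)
      have h3 := mul_le_mul_of_nonneg_left h1 hB
      linarith
    have repr' : ∀ μ, V γ τ (m+1) μ n lam = max (μ - lam + γ * K μ) 0 := by
      intro μ
      rw [V_succ_repr γ τ lam hτ m hn hmeas μ,
        integral_gauss_translate hmeas.aestronglyMeasurable]
    have hKmeas : Measurable K := by
      have hj : Measurable (fun p : ℝ × ℝ => f (p.2 + p.1)) :=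
        hmeas.comp (measurable_snd.add measurable_fst)
      exact hj.stronglyMeasurable.integral_prod_right'.measurable
    have hVeq : (fun μ => V γ τ (m+1) μ n lam) = fun μ => max (μ - lam + γ * K μ) 0 :=
      funext repr'
    have hKconv : ConvexOn ℝ Set.univ K := by
      refine ⟨convex_univ, fun x _ y _ a b ha hb hab => ?_⟩
      simp only [smul_eq_mul]
      have hpt : ∀ z, f (z + (a*x + b*y)) ≤ a * f (z + x) + b * f (z + y) := by
        intro z
        have := hconv.2 (Set.mem_univ (z + x)) (Set.mem_univ (z + y)) ha hb hab
        simpa [smul_eq_mul, show a*(z+x) + b*(z+y) = z + (a*x + b*y) by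
          rw [show b = 1 - a from by linarith]; ring] using this
      calc K (a*x + b*y) ≤ ∫ z, a * f (z + x) + b * f (z + y) ∂ν0 := by
            refine integral_mono_of_nonneg (ae_of_all _ fun z => hnn _)
              (((hKint x).const_mul a).add ((hKint y).const_mul b))
              (ae_of_all _ fun z => hpt z)
        _ = a * K x + b * K y := by
            rw [integral_add ((hKint x).const_mul a) ((hKint y).const_mul b),
              integral_const_mul, integral_const_mul]
    have hKnn : ∀ μ, 0 ≤ K μ := fun μ => integral_nonneg fun z => hnn _
    refine ⟨?_, ?_, ?_, ?_, ?_⟩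
    · rw [hVeq]
      exact ((measurable_id.sub_const lam).add (hKmeas.const_mul γ)).max measurable_const
    · intro μ
      rw [repr' μ]
      exact le_max_right _ _
    · set E : ℝ := ∫ z, |z| ∂ν0 with hE
      have hE0 : 0 ≤ E := integral_nonneg fun z => abs_nonneg z
      have hKle : ∀ μ, K μ ≤ (A + B*E) + B * |μ| := by
        intro μ
        have hle : K μ ≤ ∫ z, (A + B*|μ|) + B * |z| ∂ν0 := by
          refine integral_mono_of_nonneg (ae_of_all _ fun z => hnn _)
            ((integrable_const _).add ((integrable_abs_gaussian 0 _).const_mul B))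
            (ae_of_all _ fun z => ?_)
          show f (z + μ) ≤ A + B*|μ| + B * |z|
          have h1 : |z + μ| ≤ |z| + |μ| := abs_add_le _ _
          have h2 : f (z + μ) ≤ A + B * |z + μ| := hgr (z + μ)
          have h3 := mul_le_mul_of_nonneg_left h1 hB
          linarith
        have heval : ∫ z, (A + B*|μ|) + B * |z| ∂ν0 = (A + B*|μ|) + B * E := by
          rw [integral_add (integrable_const _) ((integrable_abs_gaussian 0 _).const_mul B),
            integral_const, integral_const_mul]
          simp [hE, hν0]
        rw [heval] at hle
        linarith
      refine ⟨|lam| + γ*(A + B*E), 1 + γ*B, by positivity, by positivity, fun μ => ?_⟩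
      rw [repr' μ]
      apply max_le
      · have h1 := hKle μ
        have h2 : γ * K μ ≤ γ * ((A + B*E) + B * |μ|) := by
          apply mul_le_mul_of_nonneg_left h1 hγ0
        have h3 : μ - lam ≤ |μ| + |lam| := by
          linarith [le_abs_self μ, neg_abs_le lam]
        nlinarith [abs_nonneg μ]
      · positivity
    · rw [hVeq]
      have h1 : ConvexOn ℝ Set.univ (fun μ : ℝ => μ - lam + γ * K μ) := by
        have ha : ConvexOn ℝ Set.univ (fun μ : ℝ => μ - lam) := by
          refine ⟨convex_univ, fun x _ y _ a b ha hb hab => le_of_eq ?_⟩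
          simp only [smul_eq_mul]
          rw [show b = 1 - a from by linarith]
          ring
        have hb := hKconv.smul hγ0
        exact ha.add hb
      have h2 := h1.sup (convexOn_const (0:ℝ) convex_univ)
      exact h2
    · intro nt hnt0 hntlt μ
      have hntτ : (0:ℝ) < nt + τ := by linarith
      obtain ⟨hmeas', hnn', ⟨A', B', hA', hB', hgr''⟩, hconv', _⟩ := ih (nt+τ) (by linarith)
      have hgrabs' : ∀ x, |V γ τ m x (nt+τ) lam| ≤ A' + B' * |x| := fun x => by
        rw [abs_of_nonneg (hnn' x)]; exact hgr'' x
      rw [V_succ_repr γ τ lam hτ m hn hmeas μ,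
        V_succ_repr γ τ lam hτ m hnt0 hmeas' μ]
      apply max_le_max _ le_rfl
      apply add_le_add_right
      apply mul_le_mul_of_nonneg_left _ hγ0
      calc ∫ x, V γ τ m x (n+τ) lam ∂gaussianReal μ (pv τ n)
          ≤ ∫ x, V γ τ m x (nt+τ) lam ∂gaussianReal μ (pv τ n) := by
            refine integral_mono_of_nonneg (ae_of_all _ fun x => hnn x)
              (integrable_growth hmeas' hgrabs' μ _)
              (ae_of_all _ fun x => hmono (nt+τ) (by linarith) (by linarith) x)
        _ ≤ ∫ x, V γ τ m x (nt+τ) lam ∂gaussianReal μ (pv τ nt) :=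
            gauss_mono_var hmeas' hnn' hconv' hB' hgr'' (pv_mono hτ hnt0 hntlt.le) μ

end NmabAux

/-- Proposition 2: for every horizon `m`, every `μ` and all `0 < ñ < n`,
if `V_m(μ,n,γ,τ,λ) > 0` then `V_m(μ,ñ,γ,τ,λ) > 0`. -/
theorem nmab_continue_below_n (γ τ lam : ℝ)
    (hγ0 : 0 ≤ γ) (hγ1 : γ < 1) (hτ : 0 < τ) :
    ∀ m : ℕ, ∀ μ nt n : ℝ, 0 < nt → nt < n →
      0 < V γ τ m μ n lam → 0 < V γ τ m μ nt lam := by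
  intro m μ nt n hnt hlt hpos
  have h := (NmabAux.bundle γ τ lam hγ0 hγ1 hτ m n (hnt.trans hlt)).2.2.2.2 nt hnt hlt μ
  linarith
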